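/- The DPG gradient identity: ∇_θ D_KL(p, π_θ) = −(1/Z) E_{x∼π_θ}[(P(x)/π_θ(x)) ∇_θ log π_θ(x)], where p(x) = P(x)/Z and Z = Σ_x P(x). -/

import Mathlib

open scoped BigOperators

/-- The DPG gradient identity:
`∇_θ D_KL(p, π_θ) = −(1/Z) E_{x∼π_θ}[(P(x)/π_θ(x)) ∇_θ log π_θ(x)]`. -/
theorem dpg_gradient_identity
    {X : Type*} [Fintype X] {d : ℕ}
    (P : X → ℝ) (hP : ∀ x, 0 < P x)
    (Z : ℝ) (hZ : Z = ∑ x, P x)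
    (p : X → ℝ) (hp : ∀ x, p x = P x / Z)
    (π : (Fin d → ℝ) → X → ℝ)
    (hpos : ∀ θ x, 0 < π θ x) (hle : ∀ θ x, π θ x ≤ 1)
    (hsum : ∀ θ, ∑ x, π θ x = 1)
    (hdiff : ∀ x, Differentiable ℝ (fun θ => π θ x))
    (θ : Fin d → ℝ) :
    fderiv ℝ (fun θ' => ∑ x, p x * Real.log (p x / π θ' x)) θ
      = -((1 / Z) •
          ∑ x, π θ x • ((P x / π θ x) • fderiv ℝ (fun θ' => Real.log (π θ' x)) θ)) := by
  rcases isEmpty_or_nonempty X with hX | hX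
  · simp
  have hZpos : 0 < Z := by
    rw [hZ]; exact Finset.sum_pos (fun x _ => hP x) Finset.univ_nonempty
  have hppos : ∀ x, 0 < p x := fun x => by rw [hp]; exact div_pos (hP x) hZpos
  set L : X → (Fin d → ℝ) →L[ℝ] ℝ := fun x => fderiv ℝ (fun θ' => Real.log (π θ' x)) θ with hL
  have hdlog : ∀ x (θ' : Fin d → ℝ), DifferentiableAt ℝ (fun θ'' => Real.log (π θ'' x)) θ' :=
    fun x θ' => (hdiff x θ').log (ne_of_gt (hpos θ' x))
  have hfun : (fun θ' => ∑ x, p x * Real.log (p x / π θ' x))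
      = fun θ' => ∑ x, (p x * Real.log (p x) - p x * Real.log (π θ' x)) := by
    funext θ'
    refine Finset.sum_congr rfl fun x _ => ?_
    rw [Real.log_div (ne_of_gt (hppos x)) (ne_of_gt (hpos θ' x)), mul_sub]
  rw [hfun]
  have hstep : fderiv ℝ (fun θ' => ∑ x, (p x * Real.log (p x) - p x * Real.log (π θ' x))) θ
      = ∑ x, fderiv ℝ (fun θ' => p x * Real.log (p x) - p x * Real.log (π θ' x)) θ := by
    apply fderiv_fun_sum
    intro x _
    exact (differentiableAt_const _).sub ((hdlog x θ).const_mul _)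
  rw [hstep]
  have hterm : ∀ x, fderiv ℝ (fun θ' => p x * Real.log (p x) - p x * Real.log (π θ' x)) θ
      = (-(p x)) • L x := by
    intro x
    rw [fderiv_fun_sub (differentiableAt_const _) ((hdlog x θ).const_mul _),
      fderiv_fun_const, fderiv_const_mul (hdlog x θ)]
    simp only [Pi.zero_apply, zero_sub]
    exact (neg_smul (p x) _).symm
  rw [Finset.sum_congr rfl fun x _ => hterm x]
  have hR : ∀ x, π θ x • ((P x / π θ x) • L x) = P x • L x := by
    intro x
    rw [smul_smul]
    congr 1
    field_simp
    exact mul_div_cancel_left₀ _ (ne_of_gt (hpos θ x))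
  rw [Finset.sum_congr rfl fun x _ => hR x, Finset.smul_sum, ← Finset.sum_neg_distrib]
  refine Finset.sum_congr rfl fun x _ => ?_
  rw [smul_smul, hp, show P x / Z = 1 / Z * P x by ring]
  exact neg_smul (1 / Z * P x) (L x)
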